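/- If f : [0,∞) → [0,∞) is s-convex in the second sense for s ∈ (0,1], then (1/(b-a))∫_a^b f(x) dx ≤ (1/(s+1))[ (f(a)+f(b))/2 + f((a+b)/2) ]. -/

import Mathlib

open MeasureTheory intervalIntegral

lemma hh_right (s : ℝ) (f : ℝ → ℝ) (a b : ℝ)
    (hs : 0 < s)
    (hconv : ∀ x ∈ Set.Ici (0:ℝ), ∀ y ∈ Set.Ici (0:ℝ), ∀ t ∈ Set.Icc (0:ℝ) 1,
      f (t * x + (1 - t) * y) ≤ t ^ s * f x + (1 - t) ^ s * f y)
    (ha : 0 ≤ a) (hab : a < b)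
    (hfint : IntervalIntegrable f volume a b) :
    ∫ x in a..b, f x ≤ (b - a) * ((f a + f b) / (s + 1)) := by
  have hba : (0:ℝ) < b - a := by linarith
  have hba' : b - a ≠ 0 := ne_of_gt hba
  have hs1 : s + 1 ≠ 0 := by positivity
  -- change of variables
  have hsub : ∫ t in (0:ℝ)..1, f ((b - a) * t + a) = (b - a)⁻¹ * ∫ x in a..b, f x := by
    rw [intervalIntegral.integral_comp_mul_add f hba' a]
    norm_num
  -- integrability of the composition
  have hg : IntervalIntegrable (fun t => f ((b - a) * t + a)) volume 0 1 := by
    have h1 : IntervalIntegrable (fun x => f (x + a)) volume 0 (b - a) := by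
      simpa using hfint.comp_add_right a
    have h2 := h1.comp_mul_left (c := b - a)
    simpa [hba', div_self hba'] using h2
  -- integrability of the bound
  have hrpow : IntervalIntegrable (fun t : ℝ => t ^ s) volume 0 1 :=
    intervalIntegral.intervalIntegrable_rpow' (by linarith)
  have hrpow2 : IntervalIntegrable (fun t : ℝ => (1 - t) ^ s) volume 0 1 := by
    simpa using (hrpow.comp_sub_left 1).symm
  have hbound : IntervalIntegrable (fun t : ℝ => t ^ s * f b + (1 - t) ^ s * f a)
      volume 0 1 := (hrpow.mul_const _).add (hrpow2.mul_const _)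
  -- pointwise bound
  have hmono : ∫ t in (0:ℝ)..1, f ((b - a) * t + a)
      ≤ ∫ t in (0:ℝ)..1, (t ^ s * f b + (1 - t) ^ s * f a) := by
    apply intervalIntegral.integral_mono_on zero_le_one hg hbound
    intro t ht
    have h := hconv b (by simp; linarith) a ha t ht
    have : (b - a) * t + a = t * b + (1 - t) * a := by ring
    rw [this]
    exact h
  -- compute the RHS integral
  have hint1 : ∫ t in (0:ℝ)..1, t ^ s = 1 / (s + 1) := by
    rw [integral_rpow (Or.inl (by linarith))]
    rw [Real.one_rpow, Real.zero_rpow hs1]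
    ring
  have hint2 : ∫ t in (0:ℝ)..1, (1 - t) ^ s = 1 / (s + 1) := by
    have := intervalIntegral.integral_comp_sub_left (fun t : ℝ => t ^ s) 1 (a := 0) (b := 1)
    norm_num at this
    rw [this, hint1]
  have hrhs : ∫ t in (0:ℝ)..1, (t ^ s * f b + (1 - t) ^ s * f a)
      = (f a + f b) / (s + 1) := by
    rw [intervalIntegral.integral_add (hrpow.mul_const _) (hrpow2.mul_const _),
      intervalIntegral.integral_mul_const, intervalIntegral.integral_mul_const,
      hint1, hint2]
    ring
  rw [hsub, hrhs] at hmono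
  have := mul_le_mul_of_nonneg_left hmono (le_of_lt hba)
  rw [mul_inv_cancel_left₀ hba'] at this
  linarith [this]

theorem s_convex_bullen (s : ℝ) (f : ℝ → ℝ) (a b : ℝ)
    (hs : s ∈ Set.Ioc (0:ℝ) 1)
    (hf : ∀ x ∈ Set.Ici (0:ℝ), 0 ≤ f x)
    (hconv : ∀ x ∈ Set.Ici (0:ℝ), ∀ y ∈ Set.Ici (0:ℝ), ∀ t ∈ Set.Icc (0:ℝ) 1,
      f (t * x + (1 - t) * y) ≤ t ^ s * f x + (1 - t) ^ s * f y)
    (ha : 0 ≤ a) (hab : a < b)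
    (hfint : IntegrableOn f (Set.Icc a b)) :
    (1 / (b - a)) * ∫ x in a..b, f x ≤
      (1 / (s + 1)) * ((f a + f b) / 2 + f ((a + b) / 2)) := by
  obtain ⟨hs0, hs1⟩ := hs
  set m := (a + b) / 2 with hm
  have ham : a < m := by simp [hm]; linarith
  have hmb : m < b := by simp [hm]; linarith
  have huIcc : Set.uIcc a b = Set.Icc a b := Set.uIcc_of_le hab.le
  have hint : IntervalIntegrable f volume a b := (huIcc ▸ hfint).intervalIntegrable
  have hint1 : IntervalIntegrable f volume a m := hint.mono_set (by
    rw [Set.uIcc_of_le ham.le, Set.uIcc_of_le hab.le]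
    exact Set.Icc_subset_Icc le_rfl hmb.le)
  have hint2 : IntervalIntegrable f volume m b := hint.mono_set (by
    rw [Set.uIcc_of_le hmb.le, Set.uIcc_of_le hab.le]
    exact Set.Icc_subset_Icc ham.le le_rfl)
  have hsplit : (∫ x in a..b, f x) = (∫ x in a..m, f x) + ∫ x in m..b, f x :=
    (intervalIntegral.integral_add_adjacent_intervals hint1 hint2).symm
  have h1 := hh_right s f a m hs0 hconv ha ham hint1
  have h2 := hh_right s f m b hs0 hconv (by linarith) hmb hint2
  have hma : m - a = (b - a) / 2 := by rw [hm]; ring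
  have hbm : b - m = (b - a) / 2 := by rw [hm]; ring
  rw [hma] at h1
  rw [hbm] at h2
  have hba : (0:ℝ) < b - a := by linarith
  have hsum : (∫ x in a..b, f x) ≤ (b - a) / 2 * ((f a + f m) / (s + 1))
      + (b - a) / 2 * ((f m + f b) / (s + 1)) := by rw [hsplit]; linarith
  rw [div_mul_eq_mul_div, div_le_iff₀ hba, one_mul]
  calc (∫ x in a..b, f x)
      ≤ (b - a) / 2 * ((f a + f m) / (s + 1)) + (b - a) / 2 * ((f m + f b) / (s + 1)) := hsum
    _ = 1 / (s + 1) * ((f a + f b) / 2 + f m) * (b - a) := by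
        field_simp
        ring
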